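/- Define φ_τ(y) = y + τ·V(y), P_τ(y) = (I + τ·DV(y))⁻¹ (where DV is the Jacobian matrix of V), M(τ) = ∫_Y det(I + τ·DV(y)) dy, and the averaged transported bilinear form value a(τ) = (1/M(τ))·∫_Y Σ_{i,r,k,s} A_{irks}(τ, y)·(Du(y)·P_τ(y))_{ks}·(Dv(y)·P_τ(y))_{ir}·det(I + τ·DV(y)) dy. Then there is ε > 0 such that a(τ) is well defined for |τ| < ε, a is differentiable at τ = 0, and a'(0) = (1/|Y|)·∫_Y Σ A_{irks}(0,y)·(δ_{rj}δ_{sl}·div V(y) − δ_{jr}·∂_s V_l(y) − δ_{ls}·∂_r V_j(y))·∂_l u_k(y)·∂_j v_i(y) dy + (1/|Y|)·∫_Y Σ ∂_τ A_{irks}(0,y)·∂_s u_k(y)·∂_r v_i(y) dy − a(0)·(1/|Y|)·∫_Y div V(y) dy, where |Y| = M(0) and repeated indices are summed over 1,…,n. -/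

import Mathlib

open MeasureTheory

/-- Jacobian matrix `Du(y)` of a map `u : ℝⁿ → ℝⁿ`: `(Du)_{kl} = ∂_l u_k`. -/
noncomputable def jacMat (n : ℕ) (u : (Fin n → ℝ) → (Fin n → ℝ)) (y : Fin n → ℝ) :
    Matrix (Fin n) (Fin n) ℝ :=
  Matrix.of fun k l => fderiv ℝ u y (Pi.single l 1) k

/-- Partial derivative `∂_j u_l(y)` of the `l`-th component in the `j`-th direction. -/
noncomputable def pder (n : ℕ) (u : (Fin n → ℝ) → (Fin n → ℝ)) (j l : Fin n)
    (y : Fin n → ℝ) : ℝ :=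
  fderiv ℝ u y (Pi.single j 1) l

/-- Divergence `div V(y) = Σ_i ∂_i V_i(y)`. -/
noncomputable def divg (n : ℕ) (V : (Fin n → ℝ) → (Fin n → ℝ)) (y : Fin n → ℝ) : ℝ :=
  ∑ i, fderiv ℝ V y (Pi.single i 1) i

/-- Kronecker delta. -/
def kdelta {n : ℕ} (i j : Fin n) : ℝ := if i = j then 1 else 0

/-- `P_τ(y) = (I + τ·DV(y))⁻¹`. -/
noncomputable def Pmat (n : ℕ) (V : (Fin n → ℝ) → (Fin n → ℝ)) (τ : ℝ)
    (y : Fin n → ℝ) : Matrix (Fin n) (Fin n) ℝ :=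
  ((1 : Matrix (Fin n) (Fin n) ℝ) + τ • jacMat n V y)⁻¹

/-- `M(τ) = ∫_Y det(I + τ·DV(y)) dy`. -/
noncomputable def Mfun (n : ℕ) (Y : Set (Fin n → ℝ))
    (V : (Fin n → ℝ) → (Fin n → ℝ)) (τ : ℝ) : ℝ :=
  ∫ y in Y, ((1 : Matrix (Fin n) (Fin n) ℝ) + τ • jacMat n V y).det

/-- The averaged transported bilinear-form value
`a(τ) = (1/M(τ))·∫_Y Σ_{irks} A_{irks}(τ,y)·(Du·P_τ)_{ks}·(Dv·P_τ)_{ir}·det(I + τ·DV) dy`. -/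
noncomputable def aForm (n : ℕ) (Y : Set (Fin n → ℝ))
    (V u v : (Fin n → ℝ) → (Fin n → ℝ))
    (A : ℝ × (Fin n → ℝ) → Fin n → Fin n → Fin n → Fin n → ℝ) (τ : ℝ) : ℝ :=
  (1 / Mfun n Y V τ) *
    ∫ y in Y,
      (∑ i, ∑ r, ∑ k, ∑ s,
          A (τ, y) i r k s * (jacMat n u y * Pmat n V τ y) k s *
            (jacMat n v y * Pmat n V τ y) i r) *
        ((1 : Matrix (Fin n) (Fin n) ℝ) + τ • jacMat n V y).det

section AuxiliaryLemmas

open Matrix Metric Filter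

/-- Entry of a continuous-on matrix-valued map is continuous-on. -/
lemma ContinuousOn.matrixEntry {α : Type*} [TopologicalSpace α] {n : ℕ}
    {X : α → Matrix (Fin n) (Fin n) ℝ} {s : Set α} (hX : ContinuousOn X s) (a b : Fin n) :
    ContinuousOn (fun p => X p a b) s :=
  (continuous_apply b).comp_continuousOn ((continuous_apply a).comp_continuousOn hX)

/-- Formal derivative of `τ ↦ det (1 + τ • N)` evaluated at a matrix `X = 1 + τ • N`. -/
noncomputable def detD (n : ℕ) (X N : Matrix (Fin n) (Fin n) ℝ) : ℝ :=
  ∑ σ : Equiv.Perm (Fin n), (Equiv.Perm.sign σ : ℝ) *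
    ∑ i, (∏ j ∈ Finset.univ.erase i, X (σ j) j) * N (σ i) i

lemma hasDerivAt_detE (n : ℕ) (M : Matrix (Fin n) (Fin n) ℝ) (τ : ℝ) :
    HasDerivAt (fun t : ℝ => ((1 : Matrix (Fin n) (Fin n) ℝ) + t • M).det)
      (detD n (1 + τ • M) M) τ := by
  simp only [Matrix.det_apply']
  apply HasDerivAt.fun_sum
  intro σ _
  have h1 : ∀ i ∈ Finset.univ, HasDerivAt
      (fun t : ℝ => ((1 : Matrix (Fin n) (Fin n) ℝ) + t • M) (σ i) i) (M (σ i) i) τ := by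
    intro i _
    simp only [Matrix.add_apply, Matrix.smul_apply, smul_eq_mul]
    exact (hasDerivAt_mul_const (M (σ i) i)).const_add _
  have := (HasDerivAt.fun_finsetProd h1).const_mul ((Equiv.Perm.sign σ : ℝ))
  simpa only [smul_eq_mul] using this

lemma continuousOn_detD (n : ℕ) {X N : ℝ × (Fin n → ℝ) → Matrix (Fin n) (Fin n) ℝ}
    {s : Set (ℝ × (Fin n → ℝ))}
    (hX : ContinuousOn X s) (hN : ContinuousOn N s) :
    ContinuousOn (fun p => detD n (X p) (N p)) s := by
  unfold detD
  apply continuousOn_finset_sum; intro σ _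
  apply (continuousOn_const.mul ?_)
  apply continuousOn_finset_sum; intro i _
  exact (continuousOn_finset_prod _ fun j _ => hX.matrixEntry _ _).mul (hN.matrixEntry _ _)

lemma detD_one (n : ℕ) (M : Matrix (Fin n) (Fin n) ℝ) :
    detD n 1 M = Matrix.trace M := by
  unfold detD
  rw [Finset.sum_eq_single 1]
  · have : ∀ x : Fin n, (∏ j ∈ Finset.univ.erase x,
        (1 : Matrix (Fin n) (Fin n) ℝ) ((1 : Equiv.Perm (Fin n)) j) j) = 1 := by
      intro x
      apply Finset.prod_eq_one
      intro j _
      rw [Equiv.Perm.one_apply, Matrix.one_apply_eq]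
    simp [this, Matrix.trace, Matrix.diag]
  · intro σ _ hσ
    have : ∀ i : Fin n, (∏ j ∈ Finset.univ.erase i,
        (1 : Matrix (Fin n) (Fin n) ℝ) (σ j) j) = 0 := by
      intro i
      obtain ⟨j, hji, hj⟩ : ∃ j, j ≠ i ∧ σ j ≠ j := by
        by_contra h
        push_neg at h
        apply hσ
        have hi : σ i = i := by
          by_contra hii
          exact hii (σ.injective (h (σ i) hii))
        ext x
        rcases eq_or_ne x i with rfl | hx
        · simp [hi]
        · simp [h x hx]
      refine Finset.prod_eq_zero (Finset.mem_erase.mpr ⟨hji, Finset.mem_univ j⟩) ?_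
      exact Matrix.one_apply_ne hj
    simp [this]
  · simp

lemma kdsum (n : ℕ) (a T : ℝ) (X Z : Fin n → Fin n → ℝ) (U W : Fin n → ℝ) (r s : Fin n) :
    ∑ j, ∑ l, a * (kdelta r j * kdelta s l * T - kdelta j r * X l s - kdelta l s * Z j r)
        * U l * W j
    = a * T * U s * W r - a * ((∑ l, X l s * U l) * W r) - a * (U s * ∑ j, Z j r * W j) := by
  simp only [kdelta, sub_mul, mul_sub, Finset.sum_sub_distrib, ite_mul, mul_ite, mul_zero,
    zero_mul, mul_one, one_mul, Finset.sum_ite_eq, Finset.sum_ite_eq', Finset.mem_univ, if_true,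
    Finset.mul_sum, Finset.sum_mul]
  ring_nf
  have h2 : ∀ x : Fin n, (∑ x1 : Fin n, if x = r then a * X x1 s * U x1 * W x else 0)
      = if x = r then ∑ x1 : Fin n, a * X x1 s * U x1 * W x else 0 := fun x => by
    split <;> simp
  simp only [h2, Finset.sum_ite_eq, Finset.sum_ite_eq', Finset.mem_univ, if_true]
  ring

section MatrixNormInstances

attribute [local instance] Matrix.linftyOpNormedAddCommGroup Matrix.linftyOpNormedSpace
  Matrix.linftyOpNormedRing Matrix.linftyOpNormedAlgebra

/-- Projection onto a matrix entry, as a continuous linear map. -/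
noncomputable def entryCLM (n : ℕ) (a b : Fin n) : Matrix (Fin n) (Fin n) ℝ →L[ℝ] ℝ :=
  LinearMap.toContinuousLinearMap
    { toFun := fun M => M a b, map_add' := fun _ _ => rfl, map_smul' := fun _ _ => rfl }

lemma HasDerivAt.matrixEntry {n : ℕ} {f : ℝ → Matrix (Fin n) (Fin n) ℝ}
    {f' : Matrix (Fin n) (Fin n) ℝ} {τ : ℝ} (h : HasDerivAt f f' τ) (a b : Fin n) :
    HasDerivAt (fun t => f t a b) (f' a b) τ :=
  (entryCLM n a b).hasFDerivAt.comp_hasDerivAt τ h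

lemma hasDerivAt_one_add_smul {n : ℕ} (M : Matrix (Fin n) (Fin n) ℝ) (τ : ℝ) :
    HasDerivAt (fun t : ℝ => (1 : Matrix (Fin n) (Fin n) ℝ) + t • M) M τ := by
  have := ((hasDerivAt_id' τ).smul_const M).const_add (1 : Matrix (Fin n) (Fin n) ℝ)
  rwa [one_smul] at this

lemma hasDerivAt_inv_one_add_smul {n : ℕ} (M : Matrix (Fin n) (Fin n) ℝ) (τ : ℝ)
    (h : IsUnit ((1 : Matrix (Fin n) (Fin n) ℝ) + τ • M)) :
    HasDerivAt (fun t : ℝ => ((1 : Matrix (Fin n) (Fin n) ℝ) + t • M)⁻¹)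
      (-(((1 : Matrix (Fin n) (Fin n) ℝ) + τ • M)⁻¹ * M *
          ((1 : Matrix (Fin n) (Fin n) ℝ) + τ • M)⁻¹)) τ := by
  have hinv := (hasFDerivAt_ringInverse (𝕜 := ℝ) h.unit)
  rw [h.unit_spec] at hinv
  have := hinv.comp_hasDerivAt τ (hasDerivAt_one_add_smul M τ)
  have hcoe : (↑h.unit⁻¹ : Matrix (Fin n) (Fin n) ℝ)
      = ((1 : Matrix (Fin n) (Fin n) ℝ) + τ • M)⁻¹ := by
    rw [Matrix.coe_units_inv, h.unit_spec]
  simp only [ContinuousLinearMap.neg_apply, ContinuousLinearMap.mulLeftRight_apply, hcoe] at this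
  have hfun : (fun t : ℝ => ((1 : Matrix (Fin n) (Fin n) ℝ) + t • M)⁻¹)
      = Ring.inverse ∘ (fun t : ℝ => (1 : Matrix (Fin n) (Fin n) ℝ) + t • M) :=
    funext fun t => Matrix.nonsing_inv_eq_ringInverse _
  rw [hfun]
  exact this

/-- Entrywise derivative of `τ ↦ (1 + τ • M)⁻¹`. -/
lemma hasDerivAt_inv_entry {n : ℕ} (M : Matrix (Fin n) (Fin n) ℝ) (τ : ℝ)
    (h : IsUnit ((1 : Matrix (Fin n) (Fin n) ℝ) + τ • M)) (a b : Fin n) :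
    HasDerivAt (fun t : ℝ => ((1 : Matrix (Fin n) (Fin n) ℝ) + t • M)⁻¹ a b)
      ((-(((1 : Matrix (Fin n) (Fin n) ℝ) + τ • M)⁻¹ * M *
          ((1 : Matrix (Fin n) (Fin n) ℝ) + τ • M)⁻¹)) a b) τ :=
  (hasDerivAt_inv_one_add_smul M τ h).matrixEntry a b

end MatrixNormInstances

open MeasureTheory in
lemma integrableOn_of_contOn {n : ℕ} {Y : Set (Fin n → ℝ)} (hYmeas : MeasurableSet Y)
    (hYbdd : Bornology.IsBounded Y) {f : (Fin n → ℝ) → ℝ}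
    (hf : ContinuousOn f (closure Y)) : MeasureTheory.IntegrableOn f Y := by
  obtain ⟨C, hC⟩ := hYbdd.isCompact_closure.exists_bound_of_continuousOn hf
  have hfin : volume Y < ⊤ := lt_of_le_of_lt (measure_mono subset_closure)
    hYbdd.isCompact_closure.measure_lt_top
  refine MeasureTheory.Integrable.mono' (g := fun _ => C)
    (integrableOn_const hfin.ne)
    ((hf.mono subset_closure).aestronglyMeasurable hYmeas) ?_
  exact (ae_restrict_mem hYmeas).mono fun y hy => hC y (subset_closure hy)

lemma continuous_pder {n : ℕ} {u : (Fin n → ℝ) → (Fin n → ℝ)} (hu : ContDiff ℝ 1 u)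
    (j l : Fin n) : Continuous fun y => pder n u j l y :=
  (continuous_apply l).comp ((hu.continuous_fderiv one_ne_zero).clm_apply continuous_const)

lemma continuous_jacMat {n : ℕ} {u : (Fin n → ℝ) → (Fin n → ℝ)} (hu : ContDiff ℝ 1 u) :
    Continuous fun y => jacMat n u y :=
  continuous_matrix fun k l =>
    (continuous_apply k).comp ((hu.continuous_fderiv one_ne_zero).clm_apply continuous_const)

lemma continuous_divg {n : ℕ} {V : (Fin n → ℝ) → (Fin n → ℝ)} (hV : ContDiff ℝ 1 V) :
    Continuous fun y => divg n V y :=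
  continuous_finset_sum _ fun i _ =>
    (continuous_apply i).comp ((hV.continuous_fderiv one_ne_zero).clm_apply continuous_const)

lemma trace_jacMat {n : ℕ} (V : (Fin n → ℝ) → (Fin n → ℝ)) (y : Fin n → ℝ) :
    (jacMat n V y).trace = divg n V y := by
  simp [Matrix.trace, Matrix.diag, jacMat, divg]

end AuxiliaryLemmas

section IntegrandLemmas

open Matrix Metric Filter

variable {n : ℕ} {V u v : (Fin n → ℝ) → (Fin n → ℝ)}
  {A : ℝ × (Fin n → ℝ) → Fin n → Fin n → Fin n → Fin n → ℝ}

/-- The integrand of the numerator of `aForm`. -/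
noncomputable def Ffun (n : ℕ) (V u v : (Fin n → ℝ) → (Fin n → ℝ))
    (A : ℝ × (Fin n → ℝ) → Fin n → Fin n → Fin n → Fin n → ℝ) (τ : ℝ) (y : Fin n → ℝ) : ℝ :=
  (∑ i, ∑ r, ∑ k, ∑ s,
      A (τ, y) i r k s * (jacMat n u y * Pmat n V τ y) k s *
        (jacMat n v y * Pmat n V τ y) i r) *
    ((1 : Matrix (Fin n) (Fin n) ℝ) + τ • jacMat n V y).det

/-- Derivative of `P_τ` in `τ`. -/
noncomputable def Pd (n : ℕ) (V : (Fin n → ℝ) → (Fin n → ℝ)) (τ : ℝ) (y : Fin n → ℝ) :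
    Matrix (Fin n) (Fin n) ℝ :=
  -(Pmat n V τ y * jacMat n V y * Pmat n V τ y)

/-- `τ`-derivative of the integrand of the numerator of `aForm`. -/
noncomputable def F'fun (n : ℕ) (V u v : (Fin n → ℝ) → (Fin n → ℝ))
    (A : ℝ × (Fin n → ℝ) → Fin n → Fin n → Fin n → Fin n → ℝ) (τ : ℝ) (y : Fin n → ℝ) : ℝ :=
  (∑ i, ∑ r, ∑ k, ∑ s,
      (fderiv ℝ (fun q => A q i r k s) (τ, y) (1, 0) * (jacMat n u y * Pmat n V τ y) k s *
        (jacMat n v y * Pmat n V τ y) i r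
      + A (τ, y) i r k s *
        ((jacMat n u y * Pd n V τ y) k s * (jacMat n v y * Pmat n V τ y) i r
          + (jacMat n u y * Pmat n V τ y) k s * (jacMat n v y * Pd n V τ y) i r))) *
    ((1 : Matrix (Fin n) (Fin n) ℝ) + τ • jacMat n V y).det
  + (∑ i, ∑ r, ∑ k, ∑ s,
      A (τ, y) i r k s * (jacMat n u y * Pmat n V τ y) k s *
        (jacMat n v y * Pmat n V τ y) i r) *
    detD n ((1 : Matrix (Fin n) (Fin n) ℝ) + τ • jacMat n V y) (jacMat n V y)

lemma hasDerivAt_Ffun (hA : ∀ i r k s : Fin n, ContDiff ℝ 1 fun p => A p i r k s)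
    (τ : ℝ) (y : Fin n → ℝ)
    (hun : IsUnit ((1 : Matrix (Fin n) (Fin n) ℝ) + τ • jacMat n V y)) :
    HasDerivAt (fun t => Ffun n V u v A t y) (F'fun n V u v A τ y) τ := by
  have hPe : ∀ a b, HasDerivAt (fun t => Pmat n V t y a b) (Pd n V τ y a b) τ := by
    intro a b
    have := hasDerivAt_inv_entry (jacMat n V y) τ hun a b
    simpa only [Pmat, Pd] using this
  have hBuP : ∀ k s, HasDerivAt (fun t => (jacMat n u y * Pmat n V t y) k s)
      ((jacMat n u y * Pd n V τ y) k s) τ := by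
    intro k s
    simp only [Matrix.mul_apply]
    exact HasDerivAt.fun_sum fun m _ => (hPe m s).const_mul _
  have hBvP : ∀ i r, HasDerivAt (fun t => (jacMat n v y * Pmat n V t y) i r)
      ((jacMat n v y * Pd n V τ y) i r) τ := by
    intro i r
    simp only [Matrix.mul_apply]
    exact HasDerivAt.fun_sum fun m _ => (hPe m r).const_mul _
  have hAd : ∀ i r k s : Fin n, HasDerivAt (fun t => A (t, y) i r k s)
      (fderiv ℝ (fun q => A q i r k s) (τ, y) (1, 0)) τ := by
    intro i r k s
    have h1 : HasDerivAt (fun t : ℝ => (t, y)) ((1 : ℝ), (0 : Fin n → ℝ)) τ :=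
      (hasDerivAt_id τ).prodMk (hasDerivAt_const τ y)
    exact (((hA i r k s).differentiable one_ne_zero (τ, y)).hasFDerivAt).comp_hasDerivAt τ h1
  have hS : HasDerivAt (fun t => ∑ i, ∑ r, ∑ k, ∑ s,
      A (t, y) i r k s * (jacMat n u y * Pmat n V t y) k s *
        (jacMat n v y * Pmat n V t y) i r)
      (∑ i, ∑ r, ∑ k, ∑ s,
        (fderiv ℝ (fun q => A q i r k s) (τ, y) (1, 0) * (jacMat n u y * Pmat n V τ y) k s *
          (jacMat n v y * Pmat n V τ y) i r
        + A (τ, y) i r k s *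
          ((jacMat n u y * Pd n V τ y) k s * (jacMat n v y * Pmat n V τ y) i r
            + (jacMat n u y * Pmat n V τ y) k s * (jacMat n v y * Pd n V τ y) i r))) τ := by
    apply HasDerivAt.fun_sum; intro i _
    apply HasDerivAt.fun_sum; intro r _
    apply HasDerivAt.fun_sum; intro k _
    apply HasDerivAt.fun_sum; intro s _
    have := ((hAd i r k s).fun_mul (hBuP k s)).fun_mul (hBvP i r)
    exact this.congr_deriv (by ring)
  have := hS.fun_mul (hasDerivAt_detE n (jacMat n V y) τ)
  simpa only [Ffun, F'fun] using this

lemma continuous_Efun (hV : ContDiff ℝ 1 V) :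
    Continuous fun p : ℝ × (Fin n → ℝ) =>
      (1 : Matrix (Fin n) (Fin n) ℝ) + p.1 • jacMat n V p.2 :=
  continuous_const.add (continuous_fst.smul ((continuous_jacMat hV).comp continuous_snd))

lemma continuousOn_Pmat (hV : ContDiff ℝ 1 V) {s : Set (ℝ × (Fin n → ℝ))}
    (hdet : ∀ p ∈ s, ((1 : Matrix (Fin n) (Fin n) ℝ) + p.1 • jacMat n V p.2).det ≠ 0) :
    ContinuousOn (fun p : ℝ × (Fin n → ℝ) => Pmat n V p.1 p.2) s := by
  have heq : (fun p : ℝ × (Fin n → ℝ) => Pmat n V p.1 p.2)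
      = fun p => (((1 : Matrix (Fin n) (Fin n) ℝ) + p.1 • jacMat n V p.2).det)⁻¹ •
          ((1 : Matrix (Fin n) (Fin n) ℝ) + p.1 • jacMat n V p.2).adjugate := by
    funext p
    rw [Pmat, Matrix.inv_def, Ring.inverse_eq_inv]
  rw [heq]
  exact (((continuous_Efun hV).matrix_det.continuousOn).inv₀ hdet).smul
    ((continuous_Efun hV).matrix_adjugate.continuousOn)

lemma continuousOn_Pd (hV : ContDiff ℝ 1 V) {s : Set (ℝ × (Fin n → ℝ))}
    (hdet : ∀ p ∈ s, ((1 : Matrix (Fin n) (Fin n) ℝ) + p.1 • jacMat n V p.2).det ≠ 0)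
    (a b : Fin n) :
    ContinuousOn (fun p : ℝ × (Fin n → ℝ) => Pd n V p.1 p.2 a b) s := by
  have hP := continuousOn_Pmat hV hdet
  have hJ : Continuous fun p : ℝ × (Fin n → ℝ) => jacMat n V p.2 :=
    (continuous_jacMat hV).comp continuous_snd
  simp only [Pd, Matrix.neg_apply, Matrix.mul_apply]
  apply ContinuousOn.neg
  apply continuousOn_finset_sum; intro j _
  exact (continuousOn_finset_sum _ fun m _ =>
    (hP.matrixEntry a m).mul (hJ.continuousOn.matrixEntry m j)).mul (hP.matrixEntry j b)

lemma continuousOn_Ffun' (hV : ContDiff ℝ 1 V) (hu : ContDiff ℝ 1 u) (hv : ContDiff ℝ 1 v)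
    (hA : ∀ i r k s : Fin n, ContDiff ℝ 1 fun p => A p i r k s)
    {s : Set (ℝ × (Fin n → ℝ))}
    (hdet : ∀ p ∈ s, ((1 : Matrix (Fin n) (Fin n) ℝ) + p.1 • jacMat n V p.2).det ≠ 0) :
    ContinuousOn (fun p : ℝ × (Fin n → ℝ) => Ffun n V u v A p.1 p.2) s ∧
    ContinuousOn (fun p : ℝ × (Fin n → ℝ) => F'fun n V u v A p.1 p.2) s := by
  have hP := continuousOn_Pmat hV hdet
  have hBu : Continuous fun p : ℝ × (Fin n → ℝ) => jacMat n u p.2 :=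
    (continuous_jacMat hu).comp continuous_snd
  have hBv : Continuous fun p : ℝ × (Fin n → ℝ) => jacMat n v p.2 :=
    (continuous_jacMat hv).comp continuous_snd
  have hBuP : ∀ k st, ContinuousOn
      (fun p : ℝ × (Fin n → ℝ) => (jacMat n u p.2 * Pmat n V p.1 p.2) k st) s := by
    intro k st
    simp only [Matrix.mul_apply]
    exact continuousOn_finset_sum _ fun m _ =>
      (hBu.continuousOn.matrixEntry k m).mul (hP.matrixEntry m st)
  have hBvP : ∀ i r, ContinuousOn
      (fun p : ℝ × (Fin n → ℝ) => (jacMat n v p.2 * Pmat n V p.1 p.2) i r) s := by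
    intro i r
    simp only [Matrix.mul_apply]
    exact continuousOn_finset_sum _ fun m _ =>
      (hBv.continuousOn.matrixEntry i m).mul (hP.matrixEntry m r)
  have hBuPd : ∀ k st, ContinuousOn
      (fun p : ℝ × (Fin n → ℝ) => (jacMat n u p.2 * Pd n V p.1 p.2) k st) s := by
    intro k st
    simp only [Matrix.mul_apply]
    exact continuousOn_finset_sum _ fun m _ =>
      (hBu.continuousOn.matrixEntry k m).mul (continuousOn_Pd hV hdet m st)
  have hBvPd : ∀ i r, ContinuousOn
      (fun p : ℝ × (Fin n → ℝ) => (jacMat n v p.2 * Pd n V p.1 p.2) i r) s := by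
    intro i r
    simp only [Matrix.mul_apply]
    exact continuousOn_finset_sum _ fun m _ =>
      (hBv.continuousOn.matrixEntry i m).mul (continuousOn_Pd hV hdet m r)
  have hAc : ∀ i r k st : Fin n, ContinuousOn
      (fun p : ℝ × (Fin n → ℝ) => A p i r k st) s := fun i r k st =>
    (hA i r k st).continuous.continuousOn
  have hA'c : ∀ i r k st : Fin n, ContinuousOn
      (fun p : ℝ × (Fin n → ℝ) => fderiv ℝ (fun q => A q i r k st) p (1, 0)) s :=
    fun i r k st =>
    (((hA i r k st).continuous_fderiv one_ne_zero).clm_apply continuous_const).continuousOn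
  have hDet : ContinuousOn
      (fun p : ℝ × (Fin n → ℝ) =>
        ((1 : Matrix (Fin n) (Fin n) ℝ) + p.1 • jacMat n V p.2).det) s :=
    (continuous_Efun hV).matrix_det.continuousOn
  have hSc : ContinuousOn (fun p : ℝ × (Fin n → ℝ) => ∑ i, ∑ r, ∑ k, ∑ s,
      A p i r k s * (jacMat n u p.2 * Pmat n V p.1 p.2) k s *
        (jacMat n v p.2 * Pmat n V p.1 p.2) i r) s := by
    apply continuousOn_finset_sum; intro i _
    apply continuousOn_finset_sum; intro r _
    apply continuousOn_finset_sum; intro k _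
    apply continuousOn_finset_sum; intro st _
    exact ((hAc i r k st).mul (hBuP k st)).mul (hBvP i r)
  constructor
  · exact hSc.mul hDet
  · apply ContinuousOn.add
    · apply ContinuousOn.mul ?_ hDet
      apply continuousOn_finset_sum; intro i _
      apply continuousOn_finset_sum; intro r _
      apply continuousOn_finset_sum; intro k _
      apply continuousOn_finset_sum; intro st _
      exact (((hA'c i r k st).mul (hBuP k st)).mul (hBvP i r)).add
        ((hAc i r k st).mul (((hBuPd k st).mul (hBvP i r)).add
          ((hBuP k st).mul (hBvPd i r))))
    · exact hSc.mul (continuousOn_detD n (continuous_Efun hV).continuousOn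
        (((continuous_jacMat hV).comp continuous_snd)).continuousOn)

end IntegrandLemmas

section ZeroEval

open Matrix

variable {n : ℕ} {V u v : (Fin n → ℝ) → (Fin n → ℝ)}
  {A : ℝ × (Fin n → ℝ) → Fin n → Fin n → Fin n → Fin n → ℝ}

lemma Pmat_zero (V : (Fin n → ℝ) → (Fin n → ℝ)) (y : Fin n → ℝ) : Pmat n V 0 y = 1 := by
  rw [Pmat]; simp

lemma F'fun_zero (V u v : (Fin n → ℝ) → (Fin n → ℝ))
    (A : ℝ × (Fin n → ℝ) → Fin n → Fin n → Fin n → Fin n → ℝ) (y : Fin n → ℝ) :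
    F'fun n V u v A 0 y =
      (∑ i, ∑ r, ∑ k, ∑ s, ∑ j, ∑ l,
        A (0, y) i r k s *
          (kdelta r j * kdelta s l * divg n V y
            - kdelta j r * pder n V s l y
            - kdelta l s * pder n V r j y) *
          pder n u l k y * pder n v j i y)
      + ∑ i, ∑ r, ∑ k, ∑ s,
          (fderiv ℝ (fun p => A p i r k s) (0, y) (1, 0)) *
            pder n u s k y * pder n v r i y := by
  have hPd0 : Pd n V 0 y = -jacMat n V y := by
    rw [Pd, Pmat_zero]; simp
  have hE0 : (1 : Matrix (Fin n) (Fin n) ℝ) + (0 : ℝ) • jacMat n V y = 1 := by simp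
  have hker : ∀ i r k s : Fin n,
      (∑ j, ∑ l, A (0, y) i r k s *
        (kdelta r j * kdelta s l * divg n V y - kdelta j r * pder n V s l y
          - kdelta l s * pder n V r j y) * pder n u l k y * pder n v j i y)
      = A (0, y) i r k s * divg n V y * pder n u s k y * pder n v r i y
        - A (0, y) i r k s * ((∑ l, pder n V s l y * pder n u l k y) * pder n v r i y)
        - A (0, y) i r k s * (pder n u s k y * ∑ j, pder n V r j y * pder n v j i y) := by
    intro i r k s
    simpa using kdsum n (A (0, y) i r k s) (divg n V y)
      (fun l s' => pder n V s' l y) (fun j r' => pder n V r' j y)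
      (fun l => pder n u l k y) (fun j => pder n v j i y) r s
  rw [F'fun, hPd0, hE0, detD_one, Matrix.det_one, trace_jacMat]
  simp only [Pmat_zero, Matrix.mul_one, mul_one, hker]
  simp only [Finset.sum_mul, ← Finset.sum_add_distrib]
  refine Finset.sum_congr rfl fun i _ => Finset.sum_congr rfl fun r _ =>
    Finset.sum_congr rfl fun k _ => Finset.sum_congr rfl fun s _ => ?_
  simp only [Matrix.mul_apply, Matrix.neg_apply, mul_neg, Finset.sum_neg_distrib]
  simp only [← Finset.sum_mul]
  have e1 : (∑ x, pder n V s x y * pder n u x k y)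
      = ∑ x, jacMat n u y k x * jacMat n V y x s :=
    Finset.sum_congr rfl fun m _ => mul_comm _ _
  have e2 : (∑ x, pder n V r x y * pder n v x i y)
      = ∑ x, jacMat n v y i x * jacMat n V y x r :=
    Finset.sum_congr rfl fun m _ => mul_comm _ _
  rw [e1, e2]
  have e3 : pder n u s k y = jacMat n u y k s := rfl
  have e4 : pder n v r i y = jacMat n v y i r := rfl
  rw [e3, e4]
  ring

end ZeroEval

/-- shape sensitivity of the averaged transported bilinear form:
`a(τ)` is well defined for `|τ| < ε`, differentiable at `τ = 0`, and
`a'(0) = (1/|Y|)·∫_Y Σ A_{irks}(0,y)·(δ_{rj}δ_{sl}·div V − δ_{jr}∂_s V_l − δ_{ls}∂_r V_j)·∂_l u_k·∂_j v_i dy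
       + (1/|Y|)·∫_Y Σ ∂_τ A_{irks}(0,y)·∂_s u_k·∂_r v_i dy
       − a(0)·(1/|Y|)·∫_Y div V dy`, where `|Y| = M(0)`. -/
theorem bilinear_form_shape_sensitivity (n : ℕ) (hn : 1 ≤ n)
    (Y : Set (Fin n → ℝ)) (hYmeas : MeasurableSet Y)
    (hYbdd : Bornology.IsBounded Y) (hYpos : 0 < volume Y)
    (V u v : (Fin n → ℝ) → (Fin n → ℝ))
    (hV : ContDiff ℝ 1 V) (hu : ContDiff ℝ 1 u) (hv : ContDiff ℝ 1 v)
    (A : ℝ × (Fin n → ℝ) → Fin n → Fin n → Fin n → Fin n → ℝ)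
    (hA : ∀ i r k s : Fin n, ContDiff ℝ 1 fun p => A p i r k s) :
    ∃ ε > 0,
      (∀ τ : ℝ, |τ| < ε → Mfun n Y V τ ≠ 0) ∧
      HasDerivAt (aForm n Y V u v A)
        ((1 / Mfun n Y V 0) *
            (∫ y in Y, ∑ i, ∑ r, ∑ k, ∑ s, ∑ j, ∑ l,
              A (0, y) i r k s *
                (kdelta r j * kdelta s l * divg n V y
                  - kdelta j r * pder n V s l y
                  - kdelta l s * pder n V r j y) *
                pder n u l k y * pder n v j i y)
          + (1 / Mfun n Y V 0) *
            (∫ y in Y, ∑ i, ∑ r, ∑ k, ∑ s,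
              (fderiv ℝ (fun p => A p i r k s) (0, y) (1, 0)) *
                pder n u s k y * pder n v r i y)
          - aForm n Y V u v A 0 *
              ((1 / Mfun n Y V 0) * ∫ y in Y, divg n V y)) 0 := by
    classical
  have hKc : IsCompact (closure Y) := hYbdd.isCompact_closure
  have hYfin : volume Y < ⊤ := lt_of_le_of_lt (measure_mono subset_closure) hKc.measure_lt_top
  -- choose ε so that the determinant stays above 1/2
  have hev : ∀ᶠ τ in nhds (0 : ℝ), ∀ y ∈ closure Y,
      1 / 2 < ((1 : Matrix (Fin n) (Fin n) ℝ) + τ • jacMat n V y).det := by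
    apply hKc.eventually_forall_of_forall_eventually
    intro y hy
    have hopen : IsOpen {p : ℝ × (Fin n → ℝ) |
        1 / 2 < ((1 : Matrix (Fin n) (Fin n) ℝ) + p.1 • jacMat n V p.2).det} :=
      isOpen_lt continuous_const (continuous_Efun hV).matrix_det
    have hmem : ((0 : ℝ), y) ∈ {p : ℝ × (Fin n → ℝ) |
        1 / 2 < ((1 : Matrix (Fin n) (Fin n) ℝ) + p.1 • jacMat n V p.2).det} := by
      simp only [Set.mem_setOf_eq, zero_smul, add_zero, Matrix.det_one]
      norm_num
    exact hopen.eventually_mem hmem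
  rcases Metric.eventually_nhds_iff.mp hev with ⟨ε₁, hε₁, hball⟩
  set ε := ε₁ / 2 with hεdef
  have hεpos : 0 < ε := by positivity
  have hdetgt : ∀ τ : ℝ, |τ| ≤ ε → ∀ y ∈ closure Y,
      1 / 2 < ((1 : Matrix (Fin n) (Fin n) ℝ) + τ • jacMat n V y).det := by
    intro τ hτ
    apply hball
    rw [Real.dist_eq, sub_zero]
    linarith
  set s : Set (ℝ × (Fin n → ℝ)) := Metric.closedBall (0 : ℝ) ε ×ˢ closure Y with hsdef
  have hmem_s : ∀ (τ : ℝ) (y : Fin n → ℝ), |τ| ≤ ε → y ∈ closure Y → (τ, y) ∈ s := by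
    intro τ y hτ hy
    refine Set.mk_mem_prod ?_ hy
    rw [Metric.mem_closedBall, Real.dist_eq, sub_zero]
    exact hτ
  have hdetne : ∀ p : ℝ × (Fin n → ℝ), p ∈ s →
      ((1 : Matrix (Fin n) (Fin n) ℝ) + p.1 • jacMat n V p.2).det ≠ 0 := by
    rintro ⟨τ, y⟩ hp
    rw [hsdef, Set.mem_prod, Metric.mem_closedBall, Real.dist_eq, sub_zero] at hp
    have := hdetgt τ hp.1 y hp.2
    linarith
  have hunit : ∀ τ : ℝ, |τ| ≤ ε → ∀ y ∈ closure Y,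
      IsUnit ((1 : Matrix (Fin n) (Fin n) ℝ) + τ • jacMat n V y) := by
    intro τ hτ y hy
    refine (Matrix.isUnit_iff_isUnit_det _).mpr (isUnit_iff_ne_zero.mpr ?_)
    have := hdetgt τ hτ y hy
    linarith
  have hscomp : IsCompact s := (isCompact_closedBall _ _).prod hKc
  -- integrability of the determinant integrand
  have hMint : ∀ τ : ℝ, MeasureTheory.IntegrableOn
      (fun y => ((1 : Matrix (Fin n) (Fin n) ℝ) + τ • jacMat n V y).det) Y volume := by
    intro τ
    apply integrableOn_of_contOn hYmeas hYbdd
    exact ((continuous_Efun hV).matrix_det.comp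
      (continuous_const.prodMk continuous_id)).continuousOn
  -- positivity of Mfun
  have hMpos : ∀ τ : ℝ, |τ| ≤ ε → 0 < Mfun n Y V τ := by
    intro τ hτ
    have h1 : ∫ _ in Y, (1 / 2 : ℝ) ≤
        ∫ y in Y, ((1 : Matrix (Fin n) (Fin n) ℝ) + τ • jacMat n V y).det :=
      MeasureTheory.setIntegral_mono_on
        (MeasureTheory.integrableOn_const hYfin.ne) (hMint τ) hYmeas
        (fun y hy => le_of_lt (hdetgt τ hτ y (subset_closure hy)))
    have h2 : ∫ _ in Y, (1 / 2 : ℝ) = (volume Y).toReal * (1 / 2) := by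
      rw [MeasureTheory.setIntegral_const, smul_eq_mul]
      rfl
    have h3 : 0 < (volume Y).toReal := ENNReal.toReal_pos hYpos.ne' hYfin.ne
    rw [Mfun]
    nlinarith
  -- derivative of Mfun at 0
  have hdetDcont : Continuous (fun p : ℝ × (Fin n → ℝ) =>
      detD n ((1 : Matrix (Fin n) (Fin n) ℝ) + p.1 • jacMat n V p.2) (jacMat n V p.2)) := by
    rw [← continuousOn_univ]
    exact continuousOn_detD n (continuous_Efun hV).continuousOn
      ((continuous_jacMat hV).comp continuous_snd).continuousOn
  obtain ⟨C₁, hC₁⟩ := hscomp.exists_bound_of_continuousOn hdetDcont.continuousOn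
  have hMderiv : HasDerivAt (Mfun n Y V)
      (∫ y in Y, detD n ((1 : Matrix (Fin n) (Fin n) ℝ) + (0 : ℝ) • jacMat n V y)
        (jacMat n V y)) 0 := by
    have := hasDerivAt_integral_of_dominated_loc_of_deriv_le
      (μ := volume.restrict Y)
      (F := fun τ y => ((1 : Matrix (Fin n) (Fin n) ℝ) + τ • jacMat n V y).det)
      (F' := fun τ y => detD n ((1 : Matrix (Fin n) (Fin n) ℝ) + τ • jacMat n V y)
        (jacMat n V y))
      (bound := fun _ => C₁) (Metric.ball_mem_nhds 0 hεpos)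
      (Filter.Eventually.of_forall fun τ =>
        (((continuous_Efun hV).matrix_det.comp
          (continuous_const.prodMk continuous_id))).aestronglyMeasurable)
      (hMint 0)
      ((hdetDcont.comp (continuous_const.prodMk continuous_id)).aestronglyMeasurable)
      ?_ (MeasureTheory.integrableOn_const hYfin.ne)
      (Filter.Eventually.of_forall fun y τ _ => hasDerivAt_detE n (jacMat n V y) τ)
    · exact this.2
    · filter_upwards [MeasureTheory.ae_restrict_mem hYmeas] with y hy
      intro τ hτ
      exact hC₁ (τ, y) (hmem_s τ y (le_of_lt (by simpa [Real.dist_eq] using hτ))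
        (subset_closure hy))
  have hMd0 : (fun y => detD n ((1 : Matrix (Fin n) (Fin n) ℝ) + (0 : ℝ) • jacMat n V y)
      (jacMat n V y)) = fun y => divg n V y := by
    funext y
    rw [show (1 : Matrix (Fin n) (Fin n) ℝ) + (0 : ℝ) • jacMat n V y = 1 by simp,
      detD_one, trace_jacMat]
  rw [hMd0] at hMderiv
  -- derivative of the numerator at 0
  obtain ⟨hFcont, hF'cont⟩ := continuousOn_Ffun' (u := u) (v := v) (A := A) hV hu hv hA hdetne
  obtain ⟨C₂, hC₂⟩ := hscomp.exists_bound_of_continuousOn hF'cont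
  have hslice : ∀ τ : ℝ, |τ| ≤ ε → ContinuousOn (fun y => Ffun n V u v A τ y) (closure Y) := by
    intro τ hτ
    apply hFcont.comp (continuous_const.prodMk continuous_id).continuousOn
    intro y hy
    exact hmem_s τ y hτ hy
  have hslice' : ContinuousOn (fun y => F'fun n V u v A 0 y) (closure Y) := by
    apply hF'cont.comp (continuous_const.prodMk continuous_id).continuousOn
    intro y hy
    exact hmem_s 0 y (by simpa using le_of_lt hεpos) hy
  have hNderiv : HasDerivAt (fun τ => ∫ y in Y, Ffun n V u v A τ y)
      (∫ y in Y, F'fun n V u v A 0 y) 0 := by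
    have := hasDerivAt_integral_of_dominated_loc_of_deriv_le
      (μ := volume.restrict Y)
      (F := fun τ y => Ffun n V u v A τ y)
      (F' := fun τ y => F'fun n V u v A τ y)
      (bound := fun _ => C₂) (Metric.ball_mem_nhds 0 hεpos)
      ?_
      (integrableOn_of_contOn hYmeas hYbdd (hslice 0 (by simpa using le_of_lt hεpos)))
      (((hslice'.mono subset_closure)).aestronglyMeasurable hYmeas)
      ?_ (MeasureTheory.integrableOn_const hYfin.ne) ?_
    · exact this.2
    · filter_upwards [eventually_abs_sub_lt 0 hεpos] with τ hτ
      rw [show |τ - 0| = |τ| by rw [sub_zero]] at hτ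
      exact (((hslice τ (le_of_lt hτ)).mono subset_closure)).aestronglyMeasurable hYmeas
    · filter_upwards [MeasureTheory.ae_restrict_mem hYmeas] with y hy
      intro τ hτ
      exact hC₂ (τ, y) (hmem_s τ y (le_of_lt (by simpa [Real.dist_eq] using hτ))
        (subset_closure hy))
    · filter_upwards [MeasureTheory.ae_restrict_mem hYmeas] with y hy
      intro τ hτ
      exact hasDerivAt_Ffun hA τ y
        (hunit τ (le_of_lt (by simpa [Real.dist_eq] using hτ)) y (subset_closure hy))
  -- split the derivative integral into the two pieces from the statement
  have hf1cont : Continuous (fun y => ∑ i, ∑ r, ∑ k, ∑ s, ∑ j, ∑ l,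
      A (0, y) i r k s *
        (kdelta r j * kdelta s l * divg n V y
          - kdelta j r * pder n V s l y
          - kdelta l s * pder n V r j y) *
        pder n u l k y * pder n v j i y) := by
    apply continuous_finset_sum; intro i _
    apply continuous_finset_sum; intro r _
    apply continuous_finset_sum; intro k _
    apply continuous_finset_sum; intro st _
    apply continuous_finset_sum; intro j _
    apply continuous_finset_sum; intro l _
    refine ((((hA i r k st).continuous.comp
      (continuous_const.prodMk continuous_id)).mul ?_).mul
        (continuous_pder hu l k)).mul (continuous_pder hv j i)
    exact ((continuous_const.mul (continuous_divg hV)).sub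
      (continuous_const.mul (continuous_pder hV st l))).sub
      (continuous_const.mul (continuous_pder hV r j))
  have hf2cont : Continuous (fun y => ∑ i, ∑ r, ∑ k, ∑ s,
      (fderiv ℝ (fun p => A p i r k s) (0, y) (1, 0)) *
        pder n u s k y * pder n v r i y) := by
    apply continuous_finset_sum; intro i _
    apply continuous_finset_sum; intro r _
    apply continuous_finset_sum; intro k _
    apply continuous_finset_sum; intro st _
    refine ((?_ : Continuous _).mul (continuous_pder hu st k)).mul (continuous_pder hv r i)
    exact (((hA i r k st).continuous_fderiv one_ne_zero).clm_apply continuous_const).comp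
      (continuous_const.prodMk continuous_id)
  have hf1int := integrableOn_of_contOn hYmeas hYbdd hf1cont.continuousOn
  have hf2int := integrableOn_of_contOn hYmeas hYbdd hf2cont.continuousOn
  have hsplit : (∫ y in Y, F'fun n V u v A 0 y) =
      (∫ y in Y, ∑ i, ∑ r, ∑ k, ∑ s, ∑ j, ∑ l,
        A (0, y) i r k s *
          (kdelta r j * kdelta s l * divg n V y
            - kdelta j r * pder n V s l y
            - kdelta l s * pder n V r j y) *
          pder n u l k y * pder n v j i y)
      + ∫ y in Y, ∑ i, ∑ r, ∑ k, ∑ s,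
          (fderiv ℝ (fun p => A p i r k s) (0, y) (1, 0)) *
            pder n u s k y * pder n v r i y := by
    rw [show (fun y => F'fun n V u v A 0 y) = fun y =>
        (∑ i, ∑ r, ∑ k, ∑ s, ∑ j, ∑ l,
          A (0, y) i r k s *
            (kdelta r j * kdelta s l * divg n V y
              - kdelta j r * pder n V s l y
              - kdelta l s * pder n V r j y) *
            pder n u l k y * pder n v j i y)
        + ∑ i, ∑ r, ∑ k, ∑ s,
            (fderiv ℝ (fun p => A p i r k s) (0, y) (1, 0)) *
              pder n u s k y * pder n v r i y from funext fun y => F'fun_zero V u v A y]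
    exact MeasureTheory.integral_add hf1int hf2int
  rw [hsplit] at hNderiv
  -- assemble
  have hM0ne : Mfun n Y V 0 ≠ 0 := (hMpos 0 (by simpa using le_of_lt hεpos)).ne'
  have hNf : (fun τ => (Mfun n Y V τ)⁻¹ * ∫ y in Y, Ffun n V u v A τ y)
      = aForm n Y V u v A := by
    funext τ
    rw [aForm, one_div]
    rfl
  refine ⟨ε, hεpos, fun τ hτ => (hMpos τ (le_of_lt hτ)).ne', ?_⟩
  have hInv := hMderiv.fun_inv hM0ne
  have hmain := hInv.fun_mul hNderiv
  rw [← hNf]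
  exact hmain.congr_deriv (by beta_reduce; ring)
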